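/- Let 𝔽_q be a finite field whose characteristic is greater than c, where c ≥ 2 is an integer, and let a₁, a₂, a₃ ∈ 𝔽_q ∖ {0}. Then the homogeneous variety H₀ = {x ∈ 𝔽_q³ : a₁x₁^c + a₂x₂^c + a₃x₃^c = 0} contains no plane through the origin: there is no m ∈ 𝔽_q³ ∖ {0} with Π_m ⊆ H₀. -/

import Mathlib

open Polynomial

private lemma freshman_false {F : Type} [Field F] [Fintype F] (c : ℕ) (hc : 2 ≤ c)
    (hchar : c < ringChar F) (H : ∀ u v : F, (u + v) ^ c = u ^ c + v ^ c) : False := by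
  have hc0 : c ≠ 0 := by omega
  have hn : ∀ n : ℕ, ((n : F)) ^ c = (n : F) := by
    intro n
    induction n with
    | zero => simp [zero_pow hc0]
    | succ k ih =>
      push_cast
      rw [H, ih, one_pow]
  have hcharP : CharP F (ringChar F) := ringChar.charP F
  set P : F[X] := X ^ c - X with hP
  have hinj : Function.Injective (fun n : Fin (c + 1) => ((n : ℕ) : F)) := by
    intro x y hxy
    have := CharP.natCast_injOn_Iio F (ringChar F)
      (Set.mem_Iio.2 (lt_of_lt_of_le x.isLt (by omega)))
      (Set.mem_Iio.2 (lt_of_lt_of_le y.isLt (by omega))) hxy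
    exact Fin.ext this
  have heval : ∀ n : Fin (c + 1), P.eval ((n : ℕ) : F) = 0 := by
    intro n
    simp [hP, hn]
  have hdeg : P.natDegree < Fintype.card (Fin (c + 1)) := by
    have h1 : P.natDegree ≤ max (X ^ c : F[X]).natDegree (X : F[X]).natDegree :=
      Polynomial.natDegree_sub_le _ _
    simp only [Polynomial.natDegree_X_pow, Polynomial.natDegree_X] at h1
    simp only [Fintype.card_fin]
    omega
  have hP0 : P = 0 :=
    Polynomial.eq_zero_of_natDegree_lt_card_of_eval_eq_zero P hinj heval hdeg
  have : P.coeff c = 1 := by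
    simp only [hP, Polynomial.coeff_sub, Polynomial.coeff_X_pow, Polynomial.coeff_X,
      if_true, eq_self_iff_true, if_neg (by omega : ¬ 1 = c), sub_zero]
  rw [hP0] at this
  simp at this

private lemma case_lemma {F : Type} [Field F] [Fintype F] (c : ℕ) (hc : 2 ≤ c)
    (hchar : c < ringChar F) (A B D mA mB : F) (hA : A ≠ 0) (hB : B ≠ 0) (hD : D ≠ 0)
    (H : ∀ s t : F, A * s ^ c + B * t ^ c + D * (mA * s + mB * t) ^ c = 0) : False := by
  have hc0 : c ≠ 0 := by omega
  have hmA : mA ≠ 0 := by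
    intro h
    have := H 1 0
    simp [h, zero_pow hc0] at this
    exact hA this
  have hmB : mB ≠ 0 := by
    intro h
    have := H 0 1
    simp [h, zero_pow hc0] at this
    exact hB this
  have hAval : A = -D * mA ^ c := by
    have := H 1 0
    simp [zero_pow hc0] at this
    linear_combination this
  have hBval : B = -D * mB ^ c := by
    have := H 0 1
    simp [zero_pow hc0] at this
    linear_combination this
  apply freshman_false c hc hchar
  intro u v
  have := H (u / mA) (v / mB)
  rw [hAval, hBval] at this
  have h1 : mA * (u / mA) = u := by field_simp
  have h2 : mB * (v / mB) = v := by field_simp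
  rw [h1, h2] at this
  have h3 : (u / mA) ^ c = u ^ c / mA ^ c := div_pow u mA c
  have h4 : (v / mB) ^ c = v ^ c / mB ^ c := div_pow v mB c
  rw [h3, h4] at this
  have hmAc : mA ^ c ≠ 0 := pow_ne_zero _ hmA
  have hmBc : mB ^ c ≠ 0 := pow_ne_zero _ hmB
  field_simp at this
  have key : (D * (mA ^ c * mB ^ c)) * ((u + v) ^ c - u ^ c - v ^ c) = 0 := by
    linear_combination (mA ^ c * mB ^ c) * this
  have hne : D * (mA ^ c * mB ^ c) ≠ 0 := mul_ne_zero hD (mul_ne_zero hmAc hmBc)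
  have h5 := (mul_eq_zero.mp key).resolve_left hne
  linear_combination h5

/-- Let `𝔽_q` be a finite field whose characteristic is greater than `c`, where
`c ≥ 2`, and let `a₁, a₂, a₃ ∈ 𝔽_q ∖ {0}`.  Then the homogeneous variety
`H₀ = {x ∈ 𝔽_q³ : a₁x₁^c + a₂x₂^c + a₃x₃^c = 0}` contains no plane through the origin:
there is no `m ≠ 0` with `Π_m ⊆ H₀`. -/
theorem stmt_12 {F : Type} [Field F] [Fintype F]
    (c : ℕ) (hc : 2 ≤ c) (hchar : c < ringChar F)
    (a : Fin 3 → F) (ha : ∀ i, a i ≠ 0) :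
    ¬ ∃ m : Fin 3 → F, m ≠ 0 ∧
        {x : Fin 3 → F | ∑ i, m i * x i = 0}
          ⊆ {x : Fin 3 → F | ∑ i, a i * x i ^ c = 0} := by
  rintro ⟨m, hm, hsub⟩
  obtain ⟨k, hk⟩ : ∃ k, m k ≠ 0 := Function.ne_iff.1 hm
  fin_cases k
  · -- m 0 ≠ 0
    have hk' : m 0 ≠ 0 := hk
    refine case_lemma c hc hchar (a 1) (a 2) (a 0 * (-1 / m 0) ^ c) (m 1) (m 2)
      (ha 1) (ha 2) (mul_ne_zero (ha 0) (pow_ne_zero _ (by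
        simpa using div_ne_zero (neg_ne_zero.2 one_ne_zero) hk'))) ?_
    intro s t
    have hx : (![-(m 1 * s + m 2 * t) / m 0, s, t]) ∈
        {x : Fin 3 → F | ∑ i, m i * x i = 0} := by
      simp only [Set.mem_setOf_eq, Fin.sum_univ_three]
      simp only [Matrix.cons_val_zero, Matrix.cons_val_one, Matrix.head_cons,
        Matrix.cons_val_two, Matrix.tail_cons]
      field_simp [hk']
      ring
    have := hsub hx
    simp only [Set.mem_setOf_eq, Fin.sum_univ_three, Matrix.cons_val_zero,
      Matrix.cons_val_one, Matrix.head_cons, Matrix.cons_val_two, Matrix.tail_cons] at this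
    have hrw : (-(m 1 * s + m 2 * t) / m 0) ^ c =
        (-1 / m 0) ^ c * (m 1 * s + m 2 * t) ^ c := by
      rw [← mul_pow]; ring_nf
    rw [hrw] at this
    linear_combination this
  · -- m 1 ≠ 0
    have hk' : m 1 ≠ 0 := hk
    refine case_lemma c hc hchar (a 0) (a 2) (a 1 * (-1 / m 1) ^ c) (m 0) (m 2)
      (ha 0) (ha 2) (mul_ne_zero (ha 1) (pow_ne_zero _ (by
        simpa using div_ne_zero (neg_ne_zero.2 one_ne_zero) hk'))) ?_
    intro s t
    have hx : (![s, -(m 0 * s + m 2 * t) / m 1, t]) ∈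
        {x : Fin 3 → F | ∑ i, m i * x i = 0} := by
      simp only [Set.mem_setOf_eq, Fin.sum_univ_three]
      simp only [Matrix.cons_val_zero, Matrix.cons_val_one, Matrix.head_cons,
        Matrix.cons_val_two, Matrix.tail_cons]
      field_simp [hk']
      ring
    have := hsub hx
    simp only [Set.mem_setOf_eq, Fin.sum_univ_three, Matrix.cons_val_zero,
      Matrix.cons_val_one, Matrix.head_cons, Matrix.cons_val_two, Matrix.tail_cons] at this
    have hrw : (-(m 0 * s + m 2 * t) / m 1) ^ c =
        (-1 / m 1) ^ c * (m 0 * s + m 2 * t) ^ c := by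
      rw [← mul_pow]; ring_nf
    rw [hrw] at this
    linear_combination this
  · -- m 2 ≠ 0
    have hk' : m 2 ≠ 0 := hk
    refine case_lemma c hc hchar (a 0) (a 1) (a 2 * (-1 / m 2) ^ c) (m 0) (m 1)
      (ha 0) (ha 1) (mul_ne_zero (ha 2) (pow_ne_zero _ (by
        simpa using div_ne_zero (neg_ne_zero.2 one_ne_zero) hk'))) ?_
    intro s t
    have hx : (![s, t, -(m 0 * s + m 1 * t) / m 2]) ∈
        {x : Fin 3 → F | ∑ i, m i * x i = 0} := by
      simp only [Set.mem_setOf_eq, Fin.sum_univ_three]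
      simp only [Matrix.cons_val_zero, Matrix.cons_val_one, Matrix.head_cons,
        Matrix.cons_val_two, Matrix.tail_cons]
      field_simp [hk']
      ring
    have := hsub hx
    simp only [Set.mem_setOf_eq, Fin.sum_univ_three, Matrix.cons_val_zero,
      Matrix.cons_val_one, Matrix.head_cons, Matrix.cons_val_two, Matrix.tail_cons] at this
    have hrw : (-(m 0 * s + m 1 * t) / m 2) ^ c =
        (-1 / m 2) ^ c * (m 0 * s + m 1 * t) ^ c := by
      rw [← mul_pow]; ring_nf
    rw [hrw] at this
    linear_combination this
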